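/- Consider X = ℓ₁(ω₂+1). Let Γ be the set of countable subsets S of ω₂+1 containing ω₂, ordered by inclusion. For S ∈ Γ define f_S : ω₂+1 → ω₂+1 by f_S(α) = min(S ∩ [α, ω₂]) and Q_S : X → X by (Q_S x)(α) = Σ_{ξ ∈ f_S⁻¹(α)} x(ξ). Then each Q_S is a well-defined linear projection onto ℓ₁(S) with ‖Q_S‖ = 1, and for S ⊆ T in Γ one has Q_T ∘ Q_S = Q_S and Q_S ∘ Q_T = Q_S. -/

import Mathlib

noncomputable section
open scoped ENNReal NNReal

/-- The ordinal `ω₂`. -/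
def om2 : Ordinal.{0} := (Cardinal.aleph 2).ord

/-- The index set `ω₂ + 1 = [0, ω₂]`. -/
abbrev OmTwoPlusOne : Type 1 := Set.Iic om2

/-- The Banach space `ℓ₁(ω₂ + 1)`. -/
abbrev ellOne : Type 1 := lp (fun _ : OmTwoPlusOne => ℝ) 1

/-- `f_S(α) = min (S ∩ [α, ω₂])`. -/
def fS (S : Set Ordinal) (α : Ordinal) : Ordinal := sInf (S ∩ Set.Ici α)

namespace Stmt15

variable {ι : Type*}

/-- Pushforward of a function along the fibers of `g`. -/
def pfun (g : ι → ι) (x : ι → ℝ) (i : ι) : ℝ := ∑' ξ : {ξ // g ξ = i}, x ξ.val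

lemma summable_fiber {x : ι → ℝ} (hx : Summable fun i => ‖x i‖) (g : ι → ι) (i : ι) :
    Summable fun ξ : {ξ // g ξ = i} => x ξ.val :=
  (hx.of_norm).subtype {ξ | g ξ = i}

lemma summable_fiber_norm {x : ι → ℝ} (hx : Summable fun i => ‖x i‖) (g : ι → ι) (i : ι) :
    Summable fun ξ : {ξ // g ξ = i} => ‖x ξ.val‖ :=
  hx.subtype {ξ | g ξ = i}

lemma hasSum_fiberwise {x : ι → ℝ} (hx : Summable fun i => ‖x i‖) (g : ι → ι) :
    HasSum (fun i => ∑' ξ : {ξ // g ξ = i}, ‖x ξ.val‖) (∑' i, ‖x i‖) :=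
  hx.hasSum.tsum_fiberwise g

lemma norm_pfun_le {x : ι → ℝ} (hx : Summable fun i => ‖x i‖) (g : ι → ι) (i : ι) :
    ‖pfun g x i‖ ≤ ∑' ξ : {ξ // g ξ = i}, ‖x ξ.val‖ :=
  norm_tsum_le_tsum_norm (summable_fiber_norm hx g i)

lemma summable_norm_pfun {x : ι → ℝ} (hx : Summable fun i => ‖x i‖) (g : ι → ι) :
    Summable fun i => ‖pfun g x i‖ :=
  Summable.of_nonneg_of_le (fun _ => norm_nonneg _) (norm_pfun_le hx g)
    (hasSum_fiberwise hx g).summable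

lemma tsum_norm_pfun_le {x : ι → ℝ} (hx : Summable fun i => ‖x i‖) (g : ι → ι) :
    ∑' i, ‖pfun g x i‖ ≤ ∑' i, ‖x i‖ := by
  calc ∑' i, ‖pfun g x i‖ ≤ ∑' i, ∑' ξ : {ξ // g ξ = i}, ‖x ξ.val‖ :=
        Summable.tsum_le_tsum (norm_pfun_le hx g) (summable_norm_pfun hx g)
          (hasSum_fiberwise hx g).summable
    _ = ∑' i, ‖x i‖ := (hasSum_fiberwise hx g).tsum_eq

/-- Equivalence between a fiber of `g ∘ h` and the corresponding sigma type. -/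
def compFiberEquiv (g h : ι → ι) (i : ι) :
    (Σ ξ : {ξ // g ξ = i}, {η // h η = ξ.val}) ≃ {η // g (h η) = i} where
  toFun p := ⟨p.2.val, by rw [p.2.prop, p.1.prop]⟩
  invFun η := ⟨⟨h η.val, η.prop⟩, ⟨η.val, rfl⟩⟩
  left_inv := by rintro ⟨⟨ξ, hξ⟩, ⟨η, hη⟩⟩; dsimp at hη; subst hη; rfl
  right_inv η := rfl

lemma pfun_comp {x : ι → ℝ} (hx : Summable fun i => ‖x i‖) (g h : ι → ι) :
    pfun g (pfun h x) = pfun (fun i => g (h i)) x := by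
  funext i
  have hsig : Summable fun p : (Σ ξ : {ξ // g ξ = i}, {η // h η = ξ.val}) => x p.2.val :=
    (compFiberEquiv g h i).summable_iff.mpr (summable_fiber hx _ i)
  calc pfun g (pfun h x) i
      = ∑' ξ : {ξ // g ξ = i}, ∑' η : {η // h η = ξ.val}, x η.val := rfl
    _ = ∑' p : (Σ ξ : {ξ // g ξ = i}, {η // h η = ξ.val}), x p.2.val := (Summable.tsum_sigma hsig).symm
    _ = ∑' η : {η // g (h η) = i}, x η.val := (compFiberEquiv g h i).tsum_eq (fun η : {η // g (h η) = i} => x η.val)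
    _ = pfun (fun i => g (h i)) x i := rfl

lemma pfun_eq_self {x : ι → ℝ} (g : ι → ι) (hg : ∀ ξ, x ξ ≠ 0 → g ξ = ξ) :
    pfun g x = x := by
  funext i
  show (∑' ξ : {ξ // g ξ = i}, x ξ.val) = x i
  by_cases hi : g i = i
  · rw [tsum_eq_single (⟨i, hi⟩ : {ξ // g ξ = i})]
    intro ξ hne
    by_contra hx0
    exact hne (Subtype.ext ((hg ξ.val hx0).symm.trans ξ.prop))
  · have hxi : x i = 0 := not_not.mp fun h => hi (hg i h)
    have hall : ∀ ξ : {ξ // g ξ = i}, x ξ.val = 0 := by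
      intro ξ
      by_contra hx0
      have h1 : (ξ : ι) = i := (hg ξ.val hx0).symm.trans ξ.prop
      rw [h1] at hx0
      exact hx0 hxi
    calc (∑' ξ : {ξ // g ξ = i}, x ξ.val) = ∑' _ : {ξ // g ξ = i}, (0 : ℝ) := tsum_congr hall
      _ = 0 := tsum_zero
      _ = x i := hxi.symm

lemma memℓp_one_iff {x : ι → ℝ} : Memℓp x 1 ↔ Summable fun i => ‖x i‖ := by
  rw [memℓp_gen_iff (by simp : (0 : ℝ) < (1 : ℝ≥0∞).toReal)]
  simp [ENNReal.toReal_one]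

lemma summable_norm_coe (x : lp (fun _ : ι => ℝ) 1) : Summable fun i => ‖x i‖ := by
  have := lp.memℓp x
  rwa [memℓp_one_iff] at this

lemma lp_norm_one (f : lp (fun _ : ι => ℝ) 1) : ‖f‖ = ∑' i, ‖f i‖ := by
  rw [lp.norm_eq_tsum_rpow (by norm_num) f]
  simp

/-- The pushforward as an element of `ℓ¹`. -/
def PopAux (g : ι → ι) (x : lp (fun _ : ι => ℝ) 1) : lp (fun _ : ι => ℝ) 1 :=
  ⟨pfun g ⇑x, memℓp_one_iff.mpr (summable_norm_pfun (summable_norm_coe x) g)⟩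

lemma PopAux_coe (g : ι → ι) (x : lp (fun _ : ι => ℝ) 1) : ⇑(PopAux g x) = pfun g ⇑x := rfl

/-- The pushforward as a continuous linear map on `ℓ¹`. -/
def Pop (g : ι → ι) : lp (fun _ : ι => ℝ) 1 →L[ℝ] lp (fun _ : ι => ℝ) 1 :=
  LinearMap.mkContinuous
    { toFun := PopAux g
      map_add' := by
        intro x y
        apply lp.ext
        funext i
        show pfun g (⇑(x + y)) i = pfun g ⇑x i + pfun g ⇑y i
        have hc : ⇑(x + y) = fun j => x j + y j := lp.coeFn_add x y
        rw [hc]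
        show (∑' ξ : {ξ // g ξ = i}, (x ξ.val + y ξ.val)) = _
        exact Summable.tsum_add (summable_fiber (summable_norm_coe x) g i)
          (summable_fiber (summable_norm_coe y) g i)
      map_smul' := by
        intro c x
        apply lp.ext
        funext i
        show pfun g (⇑(c • x)) i = c • pfun g ⇑x i
        have hc : ⇑(c • x) = fun j => c • x j := lp.coeFn_smul c x
        rw [hc]
        show (∑' ξ : {ξ // g ξ = i}, c * x ξ.val) = c * ∑' ξ : {ξ // g ξ = i}, x ξ.val
        exact tsum_mul_left }
    1
    (fun x => by
      rw [one_mul]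
      show ‖PopAux g x‖ ≤ ‖x‖
      rw [lp_norm_one, lp_norm_one, PopAux_coe]
      exact tsum_norm_pfun_le (summable_norm_coe x) g)

lemma Pop_coe (g : ι → ι) (x : lp (fun _ : ι => ℝ) 1) : ⇑(Pop g x) = pfun g ⇑x := rfl

end Stmt15

open Stmt15

section Ord

variable {S T : Set Ordinal}

lemma fS_mem (hSom : om2 ∈ S) {α : Ordinal} (hα : α ≤ om2) : fS S α ∈ S ∩ Set.Ici α :=
  csInf_mem ⟨om2, hSom, hα⟩

lemma fS_eq_self {α : Ordinal} (hα : α ∈ S) : fS S α = α :=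
  le_antisymm (csInf_le' ⟨hα, Set.self_mem_Ici⟩) (csInf_mem (⟨α, hα, Set.self_mem_Ici⟩ : (S ∩ Set.Ici α).Nonempty)).2

lemma fS_comp (hSom : om2 ∈ S) (hST : S ⊆ T) (hTsub : T ⊆ Set.Iic om2)
    {α : Ordinal} (hα : α ≤ om2) : fS S (fS T α) = fS S α := by
  have hTom : om2 ∈ T := hST hSom
  obtain ⟨haT, haα⟩ := fS_mem hTom hα
  obtain ⟨hbS, hbα⟩ := fS_mem hSom hα
  apply le_antisymm
  · have h1 : fS T α ≤ fS S α := csInf_le' ⟨hST hbS, hbα⟩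
    exact csInf_le' ⟨hbS, h1⟩
  · obtain ⟨hcS, hcα⟩ := fS_mem hSom (hTsub haT)
    exact csInf_le' ⟨hcS, Set.mem_Ici.mpr (le_trans (Set.mem_Ici.mp haα) (Set.mem_Ici.mp hcα))⟩

/-- `f_S` as a self-map of `[0, ω₂]`. -/
def gmap (S : Set Ordinal) (hSom : om2 ∈ S) (hSsub : S ⊆ Set.Iic om2) :
    OmTwoPlusOne → OmTwoPlusOne :=
  fun α => ⟨fS S α.val, hSsub (fS_mem hSom α.prop).1⟩

lemma gmap_fix (hSom : om2 ∈ S) (hSsub : S ⊆ Set.Iic om2) {α : OmTwoPlusOne}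
    (hα : α.val ∈ S) : gmap S hSom hSsub α = α :=
  Subtype.ext (fS_eq_self hα)

lemma gmap_mem (hSom : om2 ∈ S) (hSsub : S ⊆ Set.Iic om2) (α : OmTwoPlusOne) :
    (gmap S hSom hSsub α).val ∈ S :=
  (fS_mem hSom α.prop).1

end Ord

/-- for countable `S ⊆ T ⊆ ω₂ + 1` both containing `ω₂`, the maps
`(Q_S x)(α) = Σ_{ξ ∈ f_S⁻¹(α)} x(ξ)` are well-defined norm-one linear projections
of `ℓ₁(ω₂+1)` onto `ℓ₁(S)`, and `Q_T ∘ Q_S = Q_S = Q_S ∘ Q_T`. -/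
theorem statement15 (S T : Set Ordinal)
    (hSc : S.Countable) (hSom : om2 ∈ S) (hSsub : S ⊆ Set.Iic om2)
    (hTc : T.Countable) (hTom : om2 ∈ T) (hTsub : T ⊆ Set.Iic om2)
    (hST : S ⊆ T) :
    ∃ QS QT : ellOne →L[ℝ] ellOne,
      (∀ (x : ellOne) (β : OmTwoPlusOne),
        QS x β = ∑' ξ : {ξ : OmTwoPlusOne // fS S ξ.val = β.val}, x ξ) ∧
      (∀ (x : ellOne) (β : OmTwoPlusOne),
        QT x β = ∑' ξ : {ξ : OmTwoPlusOne // fS T ξ.val = β.val}, x ξ) ∧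
      QS.comp QS = QS ∧ ‖QS‖ = 1 ∧
      Set.range QS = {x : ellOne | ∀ β : OmTwoPlusOne, β.val ∉ S → x β = 0} ∧
      QT.comp QS = QS ∧ QS.comp QT = QS := by
  set gS := gmap S hSom hSsub with hgS
  set gT := gmap T hTom hTsub with hgT
  refine ⟨Pop gS, Pop gT, ?_, ?_, ?_, ?_, ?_, ?_, ?_⟩
  -- the pointwise formula for QS
  · intro x β
    show pfun gS ⇑x β = _
    exact Equiv.tsum_eq
      (Equiv.subtypeEquivRight (p := fun ξ : OmTwoPlusOne => gS ξ = β)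
        (q := fun ξ : OmTwoPlusOne => fS S ξ.val = β.val)
        (fun ξ => ⟨fun h => congrArg Subtype.val h, fun h => Subtype.ext h⟩))
      (fun ξ : {ξ : OmTwoPlusOne // fS S ξ.val = β.val} => x ξ.val)
  · intro x β
    show pfun gT ⇑x β = _
    exact Equiv.tsum_eq
      (Equiv.subtypeEquivRight (p := fun ξ : OmTwoPlusOne => gT ξ = β)
        (q := fun ξ : OmTwoPlusOne => fS T ξ.val = β.val)
        (fun ξ => ⟨fun h => congrArg Subtype.val h, fun h => Subtype.ext h⟩))
      (fun ξ : {ξ : OmTwoPlusOne // fS T ξ.val = β.val} => x ξ.val)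
  -- idempotent
  · refine ContinuousLinearMap.ext fun x => lp.ext ?_
    show pfun gS (pfun gS ⇑x) = pfun gS ⇑x
    rw [pfun_comp (summable_norm_coe x) gS gS,
      show (fun i => gS (gS i)) = gS from
        funext fun α => gmap_fix hSom hSsub (gmap_mem hSom hSsub α)]
  -- norm one
  · apply le_antisymm
    · exact LinearMap.mkContinuous_norm_le _ zero_le_one _
    · have hnorm : ‖(lp.single 1 (⟨om2, Set.self_mem_Iic⟩ : OmTwoPlusOne) (1 : ℝ) : ellOne)‖
          = 1 := by
        have := lp.norm_single (p := 1) (by norm_num)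
          (E := fun _ : OmTwoPlusOne => ℝ) (⟨om2, Set.self_mem_Iic⟩ : OmTwoPlusOne) (1 : ℝ)
        simpa using this
      have hfix : Pop gS (lp.single 1 (⟨om2, Set.self_mem_Iic⟩ : OmTwoPlusOne) (1 : ℝ))
          = lp.single 1 (⟨om2, Set.self_mem_Iic⟩ : OmTwoPlusOne) (1 : ℝ) := by
        apply lp.ext
        show pfun gS ⇑(lp.single 1 (⟨om2, Set.self_mem_Iic⟩ : OmTwoPlusOne) (1 : ℝ)) = _
        apply pfun_eq_self
        intro ξ hξ
        have hξ0 : ξ = ⟨om2, Set.self_mem_Iic⟩ := by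
          by_contra hne
          exact hξ (lp.single_apply_ne (E := fun _ : OmTwoPlusOne => ℝ) 1 ⟨om2, Set.self_mem_Iic⟩ (1 : ℝ) hne)
        rw [hξ0]
        exact gmap_fix hSom hSsub hSom
      have h := (Pop gS).le_opNorm
        (lp.single 1 (⟨om2, Set.self_mem_Iic⟩ : OmTwoPlusOne) (1 : ℝ))
      rw [hfix, hnorm, mul_one] at h
      exact h
  -- range
  · ext x
    constructor
    · rintro ⟨y, rfl⟩ β hβ
      show pfun gS ⇑y β = 0
      have : IsEmpty {ξ : OmTwoPlusOne // gS ξ = β} := by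
        constructor
        rintro ⟨ξ, hξ⟩
        exact hβ (hξ ▸ gmap_mem hSom hSsub ξ)
      exact tsum_empty
    · intro hx
      refine ⟨x, ?_⟩
      apply lp.ext
      show pfun gS ⇑x = ⇑x
      apply pfun_eq_self
      intro ξ hξ
      have hmem : ξ.val ∈ S := by
        by_contra hmem
        exact hξ (hx ξ hmem)
      exact gmap_fix hSom hSsub hmem
  -- QT ∘ QS = QS
  · refine ContinuousLinearMap.ext fun x => lp.ext ?_
    show pfun gT (pfun gS ⇑x) = pfun gS ⇑x
    rw [pfun_comp (summable_norm_coe x) gT gS,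
      show (fun i => gT (gS i)) = gS from
        funext fun α => gmap_fix hTom hTsub (hST (gmap_mem hSom hSsub α))]
  -- QS ∘ QT = QS
  · refine ContinuousLinearMap.ext fun x => lp.ext ?_
    show pfun gS (pfun gT ⇑x) = pfun gS ⇑x
    rw [pfun_comp (summable_norm_coe x) gS gT,
      show (fun i => gS (gT i)) = gS from
        funext fun α => Subtype.ext (fS_comp hSom hST hTsub α.prop)]

end
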